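/- Let B be an r×(k+1) integer matrix whose rows sum to zero, a_{n+1} a nonzero integer, and let A' be the (r+1)×(k+2) matrix obtained from B by adding a new first row (a_{I_1},…,a_{I_{k+1}}, a_{n+1}) whose entries sum to zero and a new last column whose entries below the first row are all zero. Then the gcd of all (k+1)×(k+1) minors of A' equals |a_{n+1}| times the gcd of all k×k minors of B. -/

import Mathlib

/-- The gcd of all m×m minors of a matrix. -/
def gcdMinors {r n : ℕ} (A : Matrix (Fin r) (Fin n) ℤ) (m : ℕ) : ℤ :=
  Finset.univ.gcd
    (fun p : (Fin m → Fin r) × (Fin m → Fin n) => (A.submatrix p.1 p.2).det)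

lemma det_border {k : ℕ} (M : Matrix (Fin (k+1)) (Fin (k+1)) ℤ)
    (h : ∀ j : Fin k, M j.succ 0 = 0) :
    M.det = M 0 0 * (M.submatrix Fin.succ Fin.succ).det := by
  rw [Matrix.det_succ_column_zero, Fin.sum_univ_succ]
  simp [h]

lemma det_rowsum_zero {m : ℕ} (M : Matrix (Fin (m+1)) (Fin (m+1)) ℤ)
    (h : ∀ i, ∑ j, M i j = 0) : M.det = 0 := by
  by_contra hd
  have h1 : (fun _ => (1:ℤ) : Fin (m+1) → ℤ) = 0 :=
    Matrix.eq_zero_of_mulVec_eq_zero hd (by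
      funext i; simp [Matrix.mulVec, dotProduct, h i])
  exact one_ne_zero (congrFun h1 0)

lemma detA (r k : ℕ) (B : Matrix (Fin r) (Fin (k+1)) ℤ) (c : Fin (k+1) → ℤ) (a : ℤ)
    (f : Fin k → Fin r) (g : Fin k → Fin (k+1)) :
    ((Matrix.of (Fin.cons (Fin.snoc c a) (fun i : Fin r => Fin.snoc (B i) 0))
        : Matrix (Fin (r+1)) (Fin (k+2)) ℤ).submatrix
      (Fin.cons 0 (Fin.succ ∘ f)) (Fin.cons (Fin.last (k+1)) (Fin.castSucc ∘ g))).det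
    = a * (B.submatrix f g).det := by
  rw [det_border]
  · congr 1
    · simp
    · congr 1; ext j i; simp
  · intro j; simp

lemma detB (r k : ℕ) (B : Matrix (Fin r) (Fin (k+1)) ℤ)
    (hrow : ∀ l : Fin r, ∑ i : Fin (k + 1), B l i = 0)
    (c : Fin (k + 1) → ℤ) (a : ℤ) (hc : (∑ i, c i) + a = 0)
    (f : Fin k → Fin r) :
    ((Matrix.of (Fin.cons (Fin.snoc c a) (fun i : Fin r => Fin.snoc (B i) 0))
        : Matrix (Fin (r+1)) (Fin (k+2)) ℤ).submatrix
      (Fin.cons 0 (Fin.succ ∘ f)) (Fin.castSucc : Fin (k+1) → Fin (k+2))).det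
    = -a * (B.submatrix f Fin.succ).det := by
  set N := ((Matrix.of (Fin.cons (Fin.snoc c a) (fun i : Fin r => Fin.snoc (B i) 0))
        : Matrix (Fin (r+1)) (Fin (k+2)) ℤ).submatrix
      (Fin.cons 0 (Fin.succ ∘ f)) (Fin.castSucc : Fin (k+1) → Fin (k+2))) with hNdef
  have key : N.det = (N.updateCol 0 (fun i => ∑ j, N i j)).det := by
    have h := Matrix.det_updateCol_sum N 0 (fun _ => (1:ℤ))
    simp only [one_smul, smul_eq_mul, one_mul] at h
    exact h.symm
  rw [key, det_border]
  · congr 1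
    · rw [Matrix.updateCol_self]
      have : ∀ j, N 0 j = c j := by intro j; simp [hNdef]
      simp only [this]
      linarith [hc]
    · congr 1; ext j i
      rw [Matrix.submatrix_apply, Matrix.submatrix_apply,
        Matrix.updateCol_ne (Fin.succ_ne_zero i)]
      simp [hNdef]; rw [Fin.succ_castSucc, Fin.snoc_castSucc]
  · intro j
    rw [Matrix.updateCol_self]
    have : ∀ i, N j.succ i = B (f j) i := by intro i; simp [hNdef]
    simp only [this]
    exact hrow (f j)

lemma dvd_det_perm_rows {n : ℕ} {d : ℤ} (M : Matrix (Fin n) (Fin n) ℤ)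
    (σ : Equiv.Perm (Fin n)) (h : d ∣ (M.submatrix σ id).det) : d ∣ M.det := by
  rw [Matrix.det_permute] at h
  rcases Int.units_eq_one_or (Equiv.Perm.sign σ) with hs | hs <;> rw [hs] at h
  · simpa using h
  · simpa using h

lemma dvd_det_perm_cols {n : ℕ} {d : ℤ} (M : Matrix (Fin n) (Fin n) ℤ)
    (σ : Equiv.Perm (Fin n)) (h : d ∣ (M.submatrix id σ).det) : d ∣ M.det := by
  rw [Matrix.det_permute'] at h
  rcases Int.units_eq_one_or (Equiv.Perm.sign σ) with hs | hs <;> rw [hs] at h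
  · simpa using h
  · simpa using h

/-- Let B be an r×(k+1) integer matrix with zero row sums, a ≠ 0, and A'
the (r+1)×(k+2) matrix with first row (c₁,…,c_{k+1}, a) (summing to zero), bottom-left
block B and bottom-right column of zeros.  Then
G_{(k+1)×(k+1)}(A') = |a| · G_{k×k}(B). -/
theorem gcdMinors_of_bordered_matrix
    (r k : ℕ) (hk : k ≤ r)
    (B : Matrix (Fin r) (Fin (k + 1)) ℤ)
    (hrow : ∀ l : Fin r, ∑ i : Fin (k + 1), B l i = 0)
    (c : Fin (k + 1) → ℤ) (a : ℤ) (ha : a ≠ 0)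
    (hc : (∑ i, c i) + a = 0) :
    gcdMinors
        (Matrix.of (Fin.cons (Fin.snoc c a) (fun i : Fin r => Fin.snoc (B i) 0))
          : Matrix (Fin (r + 1)) (Fin (k + 2)) ℤ)
        (k + 1)
      = (a.natAbs : ℤ) * gcdMinors B k := by
  classical
  set A' : Matrix (Fin (r+1)) (Fin (k+2)) ℤ :=
    Matrix.of (Fin.cons (Fin.snoc c a) (fun i : Fin r => Fin.snoc (B i) 0)) with hA
  have hnn1 : 0 ≤ gcdMinors A' (k+1) := by
    rw [gcdMinors, ← Finset.normalize_gcd, ← Int.abs_eq_normalize]; exact abs_nonneg _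
  have hnn2 : 0 ≤ (a.natAbs : ℤ) * gcdMinors B k := by
    apply mul_nonneg (Int.ofNat_nonneg _)
    rw [gcdMinors, ← Finset.normalize_gcd, ← Int.abs_eq_normalize]; exact abs_nonneg _
  have habs : ∀ x : ℤ, a * gcdMinors B k ∣ x → (a.natAbs : ℤ) * gcdMinors B k ∣ x := by
    intro x hx
    rcases Int.natAbs_eq a with h | h
    · rwa [← h]
    · have h2 : (a.natAbs : ℤ) * gcdMinors B k = -(a * gcdMinors B k) := by
        have hna : (a.natAbs : ℤ) = -a := by omega
        rw [hna]; ring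
      rw [h2]; exact (neg_dvd).2 hx
  have hGdvd : ∀ (f : Fin k → Fin r) (g : Fin k → Fin (k+1)),
      gcdMinors B k ∣ (B.submatrix f g).det := by
    intro f g
    simp only [gcdMinors]
    exact Finset.gcd_dvd (Finset.mem_univ ((f, g) : (Fin k → Fin r) × (Fin k → Fin (k+1))))
  apply Int.dvd_antisymm hnn1 hnn2
  · -- gcdMinors A' ∣ natAbs a * gcdMinors B k
    have h1 : ∀ (f : Fin k → Fin r) (g : Fin k → Fin (k+1)),
        gcdMinors A' (k+1) ∣ a * (B.submatrix f g).det := by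
      intro f g
      rw [← detA r k B c a f g]
      simp only [gcdMinors]
      exact Finset.gcd_dvd (Finset.mem_univ
        ((Fin.cons 0 (Fin.succ ∘ f), Fin.cons (Fin.last (k+1)) (Fin.castSucc ∘ g)) :
          (Fin (k+1) → Fin (r+1)) × (Fin (k+1) → Fin (k+2))))
    have h2 : gcdMinors A' (k+1) ∣ Finset.univ.gcd
        (fun p : (Fin k → Fin r) × (Fin k → Fin (k+1)) => a * (B.submatrix p.1 p.2).det) :=
      Finset.dvd_gcd (fun p _ => h1 p.1 p.2)
    rwa [Finset.gcd_mul_left, ← Int.abs_eq_normalize, Int.abs_eq_natAbs, gcdMinors] at h2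
  · -- natAbs a * gcdMinors B k ∣ gcdMinors A'
    rw [gcdMinors]
    apply Finset.dvd_gcd
    rintro ⟨p1, p2⟩ -
    apply habs
    show a * gcdMinors B k ∣ (A'.submatrix p1 p2).det
    by_cases h1 : Function.Injective p1
    swap
    · obtain ⟨i, j, hij, hne⟩ := Function.not_injective_iff.mp h1
      rw [Matrix.det_zero_of_row_eq hne (by funext l; simp [hij])]
      exact dvd_zero _
    by_cases h2 : Function.Injective p2
    swap
    · obtain ⟨i, j, hij, hne⟩ := Function.not_injective_iff.mp h2
      rw [Matrix.det_zero_of_column_eq hne (fun l => by simp [hij])]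
      exact dvd_zero _
    by_cases h0 : ∃ j0, p1 j0 = 0
    · obtain ⟨j0, hj0⟩ := h0
      apply dvd_det_perm_rows _ (Equiv.swap 0 j0)
      have hsub : ((A'.submatrix p1 p2).submatrix (⇑(Equiv.swap 0 j0)) id)
          = A'.submatrix (p1 ∘ ⇑(Equiv.swap 0 j0)) p2 := rfl
      rw [hsub]
      set q1 : Fin (k+1) → Fin (r+1) := p1 ∘ ⇑(Equiv.swap 0 j0) with hq1def
      have hq0 : q1 0 = 0 := by simp [hq1def, Equiv.swap_apply_left, hj0]
      have hq1inj : Function.Injective q1 := h1.comp (Equiv.injective _)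
      have hner : ∀ j : Fin k, q1 j.succ ≠ 0 := fun j h =>
        (Fin.succ_ne_zero j) (hq1inj (h.trans hq0.symm))
      set f : Fin k → Fin r := fun j => (q1 j.succ).pred (hner j) with hfdef
      have hq1eq : q1 = Fin.cons 0 (Fin.succ ∘ f) := by
        funext x
        refine Fin.cases ?_ ?_ x
        · simpa using hq0
        · intro j; simp [hfdef, Fin.succ_pred]
      by_cases hl : ∃ i0, p2 i0 = Fin.last (k+1)
      · obtain ⟨i0, hi0⟩ := hl
        apply dvd_det_perm_cols _ (Equiv.swap 0 i0)
        have hsub2 : ((A'.submatrix q1 p2).submatrix id (⇑(Equiv.swap 0 i0)))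
            = A'.submatrix q1 (p2 ∘ ⇑(Equiv.swap 0 i0)) := rfl
        rw [hsub2]
        set q2 : Fin (k+1) → Fin (k+2) := p2 ∘ ⇑(Equiv.swap 0 i0) with hq2def
        have hq20 : q2 0 = Fin.last (k+1) := by simp [hq2def, Equiv.swap_apply_left, hi0]
        have hq2inj : Function.Injective q2 := h2.comp (Equiv.injective _)
        have hnel : ∀ i : Fin k, q2 i.succ ≠ Fin.last (k+1) := fun i h =>
          (Fin.succ_ne_zero i) (hq2inj (h.trans hq20.symm))
        set g : Fin k → Fin (k+1) := fun i => (q2 i.succ).castPred (hnel i) with hgdef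
        have hq2eq : q2 = Fin.cons (Fin.last (k+1)) (Fin.castSucc ∘ g) := by
          funext x
          refine Fin.cases ?_ ?_ x
          · simpa using hq20
          · intro i; simp [hgdef, Fin.castSucc_castPred]
        rw [hq1eq, hq2eq, detA r k B c a f g]
        exact mul_dvd_mul_left a (hGdvd f g)
      · push_neg at hl
        set g : Fin (k+1) → Fin (k+1) := fun i => (p2 i).castPred (hl i) with hgdef
        have hp2eq : p2 = Fin.castSucc ∘ g := by
          funext i; simp [hgdef, Fin.castSucc_castPred]
        have hginj : Function.Injective g := by
          intro i j hgij
          apply h2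
          rw [hp2eq]
          simp [Function.comp, hgij]
        have hgbij : Function.Bijective g := Finite.injective_iff_bijective.mp hginj
        set e : Equiv.Perm (Fin (k+1)) := Equiv.ofBijective g hgbij with hedef
        have hsub3 : A'.submatrix q1 p2 = (A'.submatrix q1 Fin.castSucc).submatrix id ⇑e := by
          rw [hp2eq]; rfl
        rw [hsub3]
        apply dvd_det_perm_cols _ e⁻¹
        have hsub4 : (((A'.submatrix q1 Fin.castSucc).submatrix id ⇑e).submatrix id ⇑e⁻¹)
            = (A'.submatrix q1 Fin.castSucc).submatrix id (⇑e ∘ ⇑e⁻¹) := rfl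
        rw [hsub4]
        have : (⇑e ∘ ⇑e⁻¹) = id := by funext x; simp
        rw [this]
        have hid : (A'.submatrix q1 Fin.castSucc).submatrix id id
            = A'.submatrix q1 Fin.castSucc := rfl
        rw [hid, hq1eq, detB r k B hrow c a hc f, neg_mul]
        exact dvd_neg.mpr (mul_dvd_mul_left a (hGdvd f Fin.succ))
    · push_neg at h0
      by_cases hl : ∃ i0, p2 i0 = Fin.last (k+1)
      · obtain ⟨i0, hi0⟩ := hl
        rw [Matrix.det_eq_zero_of_column_eq_zero i0 ?_]
        · exact dvd_zero _
        intro i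
        rw [Matrix.submatrix_apply, hi0]
        rcases Fin.eq_zero_or_eq_succ (p1 i) with hz | ⟨y, hy⟩
        · exact absurd hz (h0 i)
        · rw [hy]; simp [hA]
      · push_neg at hl
        set g : Fin (k+1) → Fin (k+1) := fun i => (p2 i).castPred (hl i) with hgdef
        have hp2eq : p2 = Fin.castSucc ∘ g := by
          funext i; simp [hgdef, Fin.castSucc_castPred]
        have hginj : Function.Injective g := by
          intro i j hgij
          apply h2
          rw [hp2eq]
          simp [Function.comp, hgij]
        have hgbij : Function.Bijective g := Finite.injective_iff_bijective.mp hginj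
        rw [det_rowsum_zero]
        · exact dvd_zero _
        intro i
        have hrowval : ∀ l : Fin (k+1), (A'.submatrix p1 p2) i l = B ((p1 i).pred (h0 i)) (g l) := by
          intro l
          rcases Fin.eq_zero_or_eq_succ (p1 i) with hz | ⟨y, hy⟩
          · exact absurd hz (h0 i)
          · rw [Matrix.submatrix_apply, hp2eq]
            simp only [hy, Fin.pred_succ, Function.comp_apply]
            simp [hA]
        simp only [hrowval]
        rw [Function.Bijective.sum_comp hgbij (fun x => B ((p1 i).pred (h0 i)) x)]
        exact hrow _
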